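/- Let G be a finite directed graph, R a set of vertices of G, and k a positive integer. For every pair of R-directed forests F and F' in G with |A(F)| = |A(F')| = k, there exists a reconfiguration sequence ⟨F = F_0, F_1, …, F_ℓ = F'⟩ in which every F_i is an R-directed forest in G with k arcs, and whose length ℓ is at most k. -/

import Mathlib

/-- The vertex set of a set of arcs. -/
def arcVerts {V : Type*} [DecidableEq V] (T : Finset (V × V)) : Finset V :=
  T.image Prod.fst ∪ T.image Prod.snd

/-- The in-degree of a vertex `v` in a set of arcs `T`. -/
def inDeg {V : Type*} [DecidableEq V] (T : Finset (V × V)) (v : V) : ℕ :=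
  (T.filter fun e => e.2 = v).card

/-- The step relation of a set of arcs: `arcRel T a b` iff `(a, b)` is an arc of `T`. -/
def arcRel {V : Type*} (T : Finset (V × V)) : V → V → Prop := fun a b => (a, b) ∈ T

/-- `T` is (the arc set of) a directed tree rooted at `r`: the root has in-degree `0`,
every other vertex has in-degree exactly `1`, and every vertex is reachable from `r`. -/
def IsDirTree {V : Type*} [DecidableEq V] (T : Finset (V × V)) (r : V) : Prop :=
  inDeg T r = 0 ∧ (∀ v ∈ arcVerts T, v ≠ r → inDeg T v = 1) ∧
    ∀ v ∈ arcVerts T, Relation.ReflTransGen (arcRel T) r v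

/-- `F` is (the arc set of) a directed forest: every vertex has in-degree at most `1`
and there is no directed cycle. -/
def IsDirForest {V : Type*} [DecidableEq V] (F : Finset (V × V)) : Prop :=
  (∀ v, inDeg F v ≤ 1) ∧ ∀ e ∈ F, ¬ Relation.ReflTransGen (arcRel F) e.2 e.1

/-- `F` is an `R`-directed forest: a directed forest whose set of component roots is
exactly `R` (roots in `R` not incident to any arc of `F` form singleton components). -/
def IsRDirForest {V : Type*} [DecidableEq V] (R : Finset V) (F : Finset (V × V)) : Prop :=
  IsDirForest F ∧ (∀ r ∈ R, inDeg F r = 0) ∧ ∀ v ∈ arcVerts F, inDeg F v = 0 → v ∈ R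

open Relation Finset
set_option linter.unusedSectionVars false

namespace StmtAux

variable {V : Type*} [DecidableEq V]

lemma arc_eq {F : Finset (V × V)} {y : V} (hdeg : inDeg F y ≤ 1) {e1 e2 : V × V}
    (h1 : e1 ∈ F) (h2 : e2 ∈ F) (hy1 : e1.2 = y) (hy2 : e2.2 = y) : e1 = e2 :=
  Finset.card_le_one.mp hdeg _ (mem_filter.mpr ⟨h1, hy1⟩) _ (mem_filter.mpr ⟨h2, hy2⟩)

lemma inDeg_eq_zero {F : Finset (V × V)} {y : V} : inDeg F y = 0 ↔ ∀ e ∈ F, e.2 ≠ y := by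
  simp [inDeg, Finset.card_eq_zero, Finset.filter_eq_empty_iff]

lemma inDeg_ne_zero {F : Finset (V × V)} {e : V × V} (he : e ∈ F) : inDeg F e.2 ≠ 0 :=
  fun h => inDeg_eq_zero.mp h e he rfl

lemma exists_in_arc {F : Finset (V × V)} {y : V} (h : inDeg F y ≠ 0) :
    ∃ e ∈ F, e.2 = y := by
  have : (F.filter fun e => e.2 = y).Nonempty := Finset.card_pos.mp (Nat.pos_of_ne_zero h)
  obtain ⟨e, he⟩ := this
  exact ⟨e, (mem_filter.mp he).1, (mem_filter.mp he).2⟩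

lemma mem_arcVerts {T : Finset (V × V)} {a : V} :
    a ∈ arcVerts T ↔ ∃ e ∈ T, e.1 = a ∨ e.2 = a := by
  simp only [arcVerts, Finset.mem_union, Finset.mem_image]
  aesop

lemma rtg_mono {S T : Finset (V × V)} (h : S ⊆ T) {a b : V}
    (hab : ReflTransGen (arcRel S) a b) : ReflTransGen (arcRel T) a b :=
  (ReflTransGen.mono (fun _ _ hxy => h hxy) : ReflTransGen (arcRel S) ≤ ReflTransGen (arcRel T)) _ _ hab

lemma rtg_insert {F : Finset (V × V)} {e : V × V} {a b : V}
    (h : ReflTransGen (arcRel (insert e F)) a b) :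
    ReflTransGen (arcRel F) a b ∨
      (ReflTransGen (arcRel F) a e.1 ∧ ReflTransGen (arcRel F) e.2 b) := by
  induction h with
  | refl => exact Or.inl ReflTransGen.refl
  | @tail m c h1 harc ih =>
    rcases Finset.mem_insert.mp harc with hme | hmf
    · have h1' : e.1 = m := congrArg Prod.fst hme.symm
      have h2' : e.2 = c := congrArg Prod.snd hme.symm
      rcases ih with h | ⟨hh, _⟩
      · exact Or.inr ⟨h1' ▸ h, h2' ▸ ReflTransGen.refl⟩
      · exact Or.inr ⟨hh, h2' ▸ ReflTransGen.refl⟩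
    · rcases ih with h | ⟨hh1, hh2⟩
      · exact Or.inl (h.tail hmf)
      · exact Or.inr ⟨hh1, hh2.tail hmf⟩

lemma acyclic_insert {F : Finset (V × V)} {e : V × V}
    (hA : ∀ f ∈ F, ¬ ReflTransGen (arcRel F) f.2 f.1)
    (hnc : ¬ ReflTransGen (arcRel F) e.2 e.1) :
    ∀ f ∈ insert e F, ¬ ReflTransGen (arcRel (insert e F)) f.2 f.1 := by
  intro f hf hcyc
  have harcf : ∀ g ∈ F, arcRel F g.1 g.2 := fun g hg => by
    show (g.1, g.2) ∈ F; simpa using hg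
  rcases rtg_insert hcyc with h | ⟨h1, h2⟩
  · rcases Finset.mem_insert.mp hf with rfl | hfF
    · exact hnc h
    · exact hA f hfF h
  · rcases Finset.mem_insert.mp hf with rfl | hfF
    · exact hnc h2
    · exact hnc (((h2.tail (harcf f hfF)).trans h1))

/-- Descend a `P`-chain: if there is an `F`-path `v →* u` and a `P`-chain `r →* u`
with `P ⊆ F`, `P ⊆ F'`, then either `v →* u` already in `F'`, or `v →* r` in `F`. -/
lemma descend {F F' S : Finset (V × V)} (hdeg : ∀ w, inDeg F w ≤ 1)
    (hSF : S ⊆ F) (hSF' : S ⊆ F') :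
    ∀ {r u : V}, ReflTransGen (arcRel S) r u → ∀ {v : V},
      ReflTransGen (arcRel F) v u →
      ReflTransGen (arcRel F') v u ∨ ReflTransGen (arcRel F) v r := by
  intro r u hchain
  induction hchain with
  | refl => exact fun h => Or.inr h
  | @tail m u' h1 harc ih =>
    intro v hvu
    rcases hvu.cases_tail with h | ⟨t, hvt, ht⟩
    · subst h; exact Or.inl ReflTransGen.refl
    · have htm : t = m := by
        have h2 : (m, u') ∈ F := hSF harc
        exact congrArg Prod.fst (arc_eq (hdeg u') (e1 := (t, u')) (e2 := (m, u')) ht h2 rfl rfl)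
      subst htm
      rcases ih hvt with h | h
      · exact Or.inl (h.tail (hSF' harc))
      · exact Or.inr h

/-- In an `R`-directed forest every vertex incident to an arc is reachable from `R`. -/
lemma reach [Fintype V] {R : Finset V} {F' : Finset (V × V)} (hF' : IsRDirForest R F') :
    ∀ b ∈ arcVerts F', ∃ r ∈ R, ReflTransGen (arcRel F') r b := by
  classical
  suffices H : ∀ n (b : V), (Finset.univ.filter fun w => ReflTransGen (arcRel F') w b).card ≤ n →
      b ∈ arcVerts F' → ∃ r ∈ R, ReflTransGen (arcRel F') r b by
    intro b hb; exact H _ b le_rfl hb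
  intro n
  induction n with
  | zero =>
    intro b hcard hb
    exfalso
    have : b ∈ Finset.univ.filter fun w => ReflTransGen (arcRel F') w b :=
      mem_filter.mpr ⟨mem_univ _, ReflTransGen.refl⟩
    have := Finset.card_pos.mpr ⟨b, this⟩
    omega
  | succ n ih =>
    intro b hcard hb
    by_cases hz : inDeg F' b = 0
    · exact ⟨b, hF'.2.2 b hb hz, ReflTransGen.refl⟩
    · obtain ⟨g, hgF', hgb⟩ := exists_in_arc hz
      have harc : arcRel F' g.1 b := by show (g.1, b) ∈ F'; rw [← hgb]; simpa using hgF'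
      have hanc : (Finset.univ.filter fun w => ReflTransGen (arcRel F') w g.1) ⊆
          (Finset.univ.filter fun w => ReflTransGen (arcRel F') w b).erase b := by
        intro w hw
        have hw' : ReflTransGen (arcRel F') w g.1 := (mem_filter.mp hw).2
        refine Finset.mem_erase.mpr ⟨?_, mem_filter.mpr ⟨mem_univ _, hw'.tail harc⟩⟩
        rintro rfl
        exact (hF'.1.2 g hgF') (hgb ▸ hw')
      have hbmem : b ∈ Finset.univ.filter fun w => ReflTransGen (arcRel F') w b :=
        mem_filter.mpr ⟨mem_univ _, ReflTransGen.refl⟩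
      have hle : (Finset.univ.filter fun w => ReflTransGen (arcRel F') w g.1).card ≤ n := by
        have h1 := Finset.card_le_card hanc
        have h2 := Finset.card_erase_of_mem hbmem
        omega
      have hg1 : g.1 ∈ arcVerts F' := mem_arcVerts.mpr ⟨g, hgF', Or.inl rfl⟩
      obtain ⟨r, hr, hrg⟩ := ih g.1 hle hg1
      exact ⟨r, hr, hrg.tail harc⟩

lemma exists_good [Fintype V] {R : Finset V} {F F' P : Finset (V × V)}
    (hF' : IsRDirForest R F') (hPF : P ⊆ F) (hPF' : P ⊆ F')
    (hne : (F' \ F).Nonempty)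
    (hno : ¬ ∃ e'' ∈ F', e'' ∈ F ∧ e'' ∉ P ∧ (e''.1 ∈ R ∨ ∃ g ∈ P, g.2 = e''.1)) :
    ∃ e' ∈ F', e' ∉ F ∧ ∃ r ∈ R, ReflTransGen (arcRel P) r e'.1 := by
  classical
  obtain ⟨e0, he0⟩ := hne
  have he0F' : e0 ∈ F' := (Finset.mem_sdiff.mp he0).1
  have he0F : e0 ∉ F := (Finset.mem_sdiff.mp he0).2
  have hmem : e0.1 ∈ arcVerts F' := mem_arcVerts.mpr ⟨e0, he0F', Or.inl rfl⟩
  obtain ⟨r, hr, hpath⟩ := reach hF' e0.1 hmem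
  have aux : ∀ {a b : V}, ReflTransGen (arcRel F') a b →
      (∃ r ∈ R, ReflTransGen (arcRel P) r a) →
      (∃ r ∈ R, ReflTransGen (arcRel P) r b) ∨
        (∃ e' ∈ F', e' ∉ F ∧ ∃ r ∈ R, ReflTransGen (arcRel P) r e'.1) := by
    intro a b h
    induction h with
    | refl => exact fun h => Or.inl h
    | @tail m c h1 harc ih =>
      intro ha
      rcases ih ha with hm | hfound
      · by_cases hmcF : (m, c) ∈ F
        · by_cases hmcP : (m, c) ∈ P
          · obtain ⟨r', hr', hch⟩ := hm
            exact Or.inl ⟨r', hr', hch.tail hmcP⟩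
          · exfalso
            apply hno
            refine ⟨(m, c), harc, hmcF, hmcP, ?_⟩
            obtain ⟨r', hr', hch⟩ := hm
            rcases hch.cases_tail with h | ⟨d, _, hd⟩
            · exact Or.inl (h ▸ hr')
            · exact Or.inr ⟨(d, m), hd, rfl⟩
        · exact Or.inr ⟨(m, c), harc, hmcF, hm⟩
      · exact Or.inr hfound
  rcases aux hpath ⟨r, hr, ReflTransGen.refl⟩ with hgood | hfound
  · exact ⟨e0, he0F', he0F, hgood⟩
  · exact hfound

/-- One exchange step preserves being an `R`-directed forest. -/
lemma step_forest {R : Finset V} {F F' : Finset (V × V)} {e' e : V × V}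
    (hF : IsRDirForest R F) (hF' : IsRDirForest R F')
    (he'F' : e' ∈ F') (he'F : e' ∉ F)
    (hnc : ¬ ReflTransGen (arcRel F) e'.2 e'.1)
    (hu : e'.1 ∈ R ∨ inDeg F e'.1 = 1)
    (he : e ∈ F)
    (hrem : e.2 = e'.2 ∨
      ((∀ f ∈ F, f.1 ≠ e.2) ∧ e.2 ≠ e'.1 ∧ e.2 ≠ e'.2 ∧ inDeg F e'.2 = 0)) :
    IsRDirForest R (insert e' (F.erase e)) := by
  classical
  set F1 : Finset (V × V) := insert e' (F.erase e) with hF1def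
  have hsub : F1 ⊆ insert e' F := insert_subset_insert _ (erase_subset _ _)
  have hfil : ∀ y, y ≠ e'.2 →
      F1.filter (fun f => f.2 = y) = (F.filter fun f => f.2 = y).erase e := by
    intro y hy
    rw [hF1def, filter_insert, if_neg (fun h => hy h.symm), filter_erase]
  have hfil2 : ∀ y, y ≠ e'.2 → y ≠ e.2 → inDeg F1 y = inDeg F y := by
    intro y h1 h2
    have : e ∉ F.filter fun f => f.2 = y := fun h => h2 ((mem_filter.mp h).2).symm
    rw [inDeg, hfil y h1, Finset.erase_eq_of_notMem this]; rfl
  have hvnotR : e'.2 ∉ R := fun h => inDeg_ne_zero he'F' (hF'.2.1 _ h)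
  have herase0 : (F.filter fun f => f.2 = e'.2).erase e = ∅ := by
    rcases hrem with h | ⟨_, _, _, h0⟩
    · have hsing : (F.filter fun f => f.2 = e'.2) = {e} := by
        apply Finset.eq_singleton_iff_unique_mem.mpr
        refine ⟨mem_filter.mpr ⟨he, h⟩, fun g hg => ?_⟩
        exact arc_eq (hF.1.1 e'.2) (mem_filter.mp hg).1 he (mem_filter.mp hg).2 h
      rw [hsing, Finset.erase_singleton]
    · rw [Finset.card_eq_zero.mp h0, Finset.erase_empty]
  have hvdeg : inDeg F1 e'.2 = 1 := by
    rw [inDeg, hF1def, filter_insert, if_pos rfl, filter_erase, herase0]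
    simp
  have hdeg1 : ∀ w, inDeg F1 w ≤ 1 := by
    intro w
    by_cases hw : w = e'.2
    · rw [hw, hvdeg]
    · rw [inDeg, hfil w hw]
      calc ((F.filter fun f => f.2 = w).erase e).card
          ≤ (F.filter fun f => f.2 = w).card := Finset.card_le_card (erase_subset _ _)
        _ ≤ 1 := hF.1.1 w
  have hacyc : ∀ f ∈ F1, ¬ ReflTransGen (arcRel F1) f.2 f.1 := by
    have hins := acyclic_insert hF.1.2 hnc
    intro f hf hcyc
    exact hins f (hsub hf) (rtg_mono hsub hcyc)
  have hroots : ∀ r ∈ R, inDeg F1 r = 0 := by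
    intro r hr
    have hrv : r ≠ e'.2 := fun h => hvnotR (h ▸ hr)
    rw [inDeg, hfil r hrv, Finset.card_eq_zero.mp (hF.2.1 r hr) ]
    simp
  refine ⟨⟨hdeg1, hacyc⟩, hroots, ?_⟩
  intro y hy h0
  have hyv : y ≠ e'.2 := fun h => by rw [h, hvdeg] at h0; omega
  have hyu : y = e'.1 → y ∈ R := by
    intro hyeq
    rcases hu with h | h
    · exact hyeq ▸ h
    · exfalso
      have hye : y ≠ e.2 := by
        rcases hrem with hh | ⟨_, h2, _, _⟩
        · exact fun hc => hyv (hc.trans hh)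
        · exact fun hc => h2 (hyeq ▸ hc ▸ rfl)
      have heq : inDeg F1 y = inDeg F y := hfil2 y hyv hye
      rw [h0, hyeq, h] at heq
      omega
  rcases hrem with hcase | ⟨hleaf, hxu, hxv, hv0⟩
  · -- case (i): e.2 = e'.2
    have hye : y ≠ e.2 := fun h => hyv (h.trans hcase)
    have hydegF : inDeg F y = 0 := by rw [← hfil2 y hyv hye]; exact h0
    obtain ⟨f, hf, hor⟩ := mem_arcVerts.mp hy
    rcases Finset.mem_insert.mp hf with rfl | hfF
    · rcases hor with h | h
      · exact hyu h.symm
      · exact absurd h.symm hyv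
    · have : y ∈ arcVerts F :=
        mem_arcVerts.mpr ⟨f, Finset.mem_of_mem_erase hfF, hor⟩
      exact hF.2.2 y this hydegF
  · -- case (ii): e is a pendant leaf arc
    have hye : y ≠ e.2 := by
      rintro rfl
      obtain ⟨f, hf, hor⟩ := mem_arcVerts.mp hy
      rcases Finset.mem_insert.mp hf with rfl | hfF
      · rcases hor with h | h
        · exact hxu h.symm
        · exact hxv h.symm
      · have hfF' : f ∈ F := Finset.mem_of_mem_erase hfF
        have hfne : f ≠ e := Finset.ne_of_mem_erase hfF
        rcases hor with h | h
        · exact hleaf f hfF' h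
        · exact hfne (arc_eq (hF.1.1 e.2) hfF' he h rfl)
    have hydegF : inDeg F y = 0 := by rw [← hfil2 y hyv hye]; exact h0
    obtain ⟨f, hf, hor⟩ := mem_arcVerts.mp hy
    rcases Finset.mem_insert.mp hf with rfl | hfF
    · rcases hor with h | h
      · exact hyu h.symm
      · exact absurd h.symm hyv
    · have : y ∈ arcVerts F :=
        mem_arcVerts.mpr ⟨f, Finset.mem_of_mem_erase hfF, hor⟩
      exact hF.2.2 y this hydegF

lemma main [Fintype V] (A : Finset (V × V)) (R : Finset V) (F' : Finset (V × V))
    (hF'A : F' ⊆ A) (hF' : IsRDirForest R F') :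
    ∀ n (F P : Finset (V × V)), F ⊆ A → IsRDirForest R F → F.card = F'.card →
      P ⊆ F → P ⊆ F' → (∀ f ∈ F', ∀ g ∈ P, f.2 = g.1 → f ∈ P) → (F' \ P).card ≤ n →
      ∃ ℓ ≤ n, ∃ f : ℕ → Finset (V × V), f 0 = F ∧ f ℓ = F' ∧
        (∀ i ≤ ℓ, f i ⊆ A ∧ IsRDirForest R (f i) ∧ (f i).card = F'.card) ∧
        (∀ i < ℓ, (f i \ f (i + 1)).card = 1 ∧ (f (i + 1) \ f i).card = 1) := by
  classical
  intro n
  induction n with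
  | zero =>
    intro F P hFA hF hcard hPF hPF' _ hn
    have hsd : F' \ P = ∅ := Finset.card_eq_zero.mp (Nat.le_zero.mp hn)
    have hsub : F' ⊆ F := by
      intro x hx
      by_cases hxP : x ∈ P
      · exact hPF hxP
      · exact absurd (Finset.mem_sdiff.mpr ⟨hx, hxP⟩) (by simp [hsd])
    have hEq : F = F' := (Finset.eq_of_subset_of_card_le hsub hcard.le).symm
    exact ⟨0, le_rfl, fun _ => F, rfl, hEq ▸ rfl, fun i _ => ⟨hFA, hF, hcard⟩,
      fun i hi => absurd hi (Nat.not_lt_zero i)⟩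
  | succ n ih =>
    intro F P hFA hF hcard hPF hPF' hcl hn
    by_cases hFF' : F = F'
    · exact ⟨0, Nat.zero_le _, fun _ => F, rfl, hFF' ▸ rfl, fun i _ => ⟨hFA, hF, hcard⟩,
        fun i hi => absurd hi (Nat.not_lt_zero i)⟩
    by_cases hgrow : ∃ e'' ∈ F', e'' ∈ F ∧ e'' ∉ P ∧ (e''.1 ∈ R ∨ ∃ g ∈ P, g.2 = e''.1)
    · obtain ⟨e'', he''F', he''F, he''P, hgr⟩ := hgrow
      have hcl' : ∀ f ∈ F', ∀ g ∈ insert e'' P, f.2 = g.1 → f ∈ insert e'' P := by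
        intro f hf g hg hfg
        rcases Finset.mem_insert.mp hg with rfl | hgP
        · rcases hgr with h | ⟨g0, hg0, hg02⟩
          · exact absurd (hF'.2.1 _ h) (hfg ▸ inDeg_ne_zero hf)
          · have : f = g0 := arc_eq (hF'.1.1 g.1) hf (hPF' hg0) hfg hg02
            exact Finset.mem_insert_of_mem (this ▸ hg0)
        · exact Finset.mem_insert_of_mem (hcl f hf g hgP hfg)
      have hmem : e'' ∈ F' \ P := Finset.mem_sdiff.mpr ⟨he''F', he''P⟩
      have hcard' : (F' \ insert e'' P).card ≤ n := by
        rw [Finset.sdiff_insert, Finset.card_erase_of_mem hmem]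
        have : 0 < (F' \ P).card := Finset.card_pos.mpr ⟨e'', hmem⟩
        omega
      obtain ⟨ℓ, hℓ, rest⟩ := ih F (insert e'' P) hFA hF hcard
        (Finset.insert_subset he''F hPF) (Finset.insert_subset he''F' hPF') hcl' hcard'
      exact ⟨ℓ, hℓ.trans (Nat.le_succ n), rest⟩
    · have hne : (F' \ F).Nonempty := by
        rw [Finset.sdiff_nonempty]
        intro hsub
        exact hFF' ((Finset.eq_of_subset_of_card_le hsub hcard.le).symm)
      obtain ⟨e', he'F', he'F, r, hr, hchain⟩ := exists_good hF' hPF hPF' hne hgrow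
      have hvnotR : e'.2 ∉ R := fun h => inDeg_ne_zero he'F' (hF'.2.1 _ h)
      have hground : e'.1 ∈ R ∨ ∃ g ∈ P, g.2 = e'.1 := by
        rcases hchain.cases_tail with h | ⟨c, _, hd⟩
        · exact Or.inl (h ▸ hr)
        · exact Or.inr ⟨(c, e'.1), hd, rfl⟩
      have hu : e'.1 ∈ R ∨ inDeg F e'.1 = 1 := by
        rcases hground with h | ⟨g, hgP, hg2⟩
        · exact Or.inl h
        · refine Or.inr (le_antisymm (hF.1.1 _) ?_)
          exact Nat.one_le_iff_ne_zero.mpr (hg2 ▸ inDeg_ne_zero (hPF hgP))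
      have hnc : ¬ ReflTransGen (arcRel F) e'.2 e'.1 := by
        intro hp
        rcases descend hF.1.1 hPF hPF' hchain hp with h | h
        · exact hF'.1.2 e' he'F' h
        · rcases h.cases_tail with h2 | ⟨c, _, hd⟩
          · exact hvnotR (h2 ▸ hr)
          · exact inDeg_ne_zero (hd : (c, r) ∈ F) (hF.2.1 r hr)
      have key : ∀ e : V × V, e ∈ F → e ∉ P →
          (e.2 = e'.2 ∨ ((∀ f ∈ F, f.1 ≠ e.2) ∧ e.2 ≠ e'.1 ∧ e.2 ≠ e'.2 ∧ inDeg F e'.2 = 0)) →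
          ∃ ℓ ≤ n + 1, ∃ f : ℕ → Finset (V × V), f 0 = F ∧ f ℓ = F' ∧
            (∀ i ≤ ℓ, f i ⊆ A ∧ IsRDirForest R (f i) ∧ (f i).card = F'.card) ∧
            (∀ i < ℓ, (f i \ f (i + 1)).card = 1 ∧ (f (i + 1) \ f i).card = 1) := by
        intro e he heP hrem
        have hF1 : IsRDirForest R (insert e' (F.erase e)) :=
          step_forest hF hF' he'F' he'F hnc hu he hrem
        set F1 : Finset (V × V) := insert e' (F.erase e) with hF1def
        have hene' : e ≠ e' := fun h => he'F (h ▸ he)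
        have he'notFe : e' ∉ F.erase e := fun h => he'F (Finset.mem_of_mem_erase h)
        have hF1A : F1 ⊆ A :=
          Finset.insert_subset (hF'A he'F') ((Finset.erase_subset _ _).trans hFA)
        have hFpos : 0 < F.card := Finset.card_pos.mpr ⟨e, he⟩
        have hF1card : F1.card = F'.card := by
          rw [hF1def, Finset.card_insert_of_notMem he'notFe, Finset.card_erase_of_mem he]
          omega
        have he'P : e' ∉ P := fun h => he'F (hPF h)
        have hP1F1 : insert e' P ⊆ F1 := by
          apply Finset.insert_subset (Finset.mem_insert_self _ _)
          exact fun g hg => Finset.mem_insert_of_mem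
            (Finset.mem_erase.mpr ⟨fun hh => heP (hh ▸ hg), hPF hg⟩)
        have hP1F' : insert e' P ⊆ F' := Finset.insert_subset he'F' hPF'
        have hcl1 : ∀ f ∈ F', ∀ g ∈ insert e' P, f.2 = g.1 → f ∈ insert e' P := by
          intro f hf g hg hfg
          rcases Finset.mem_insert.mp hg with rfl | hgP
          · rcases hground with h | ⟨g0, hg0, hg02⟩
            · exact absurd (hF'.2.1 _ h) (hfg ▸ inDeg_ne_zero hf)
            · have : f = g0 := arc_eq (hF'.1.1 g.1) hf (hPF' hg0) hfg hg02
              exact Finset.mem_insert_of_mem (this ▸ hg0)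
          · exact Finset.mem_insert_of_mem (hcl f hf g hgP hfg)
        have he'FP : e' ∈ F' \ P := Finset.mem_sdiff.mpr ⟨he'F', he'P⟩
        have hcard1 : (F' \ insert e' P).card ≤ n := by
          rw [Finset.sdiff_insert, Finset.card_erase_of_mem he'FP]
          have : 0 < (F' \ P).card := Finset.card_pos.mpr ⟨e', he'FP⟩
          omega
        obtain ⟨ℓ, hℓ, f, hf0, hfl, hprops, hdiffs⟩ :=
          ih F1 (insert e' P) hF1A hF1 hF1card hP1F1 hP1F' hcl1 hcard1
        have hFdiff : F \ F1 = {e} := by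
          ext g
          simp only [hF1def, Finset.mem_sdiff, Finset.mem_insert, Finset.mem_erase,
            Finset.mem_singleton, not_or, not_and]
          constructor
          · rintro ⟨hgF, hg2, hg3⟩
            by_contra hgne
            exact hg3 hgne hgF
          · rintro rfl
            exact ⟨he, hene', fun h _ => h rfl⟩
        have hF1diff : F1 \ F = {e'} := by
          ext g
          simp only [hF1def, Finset.mem_sdiff, Finset.mem_insert, Finset.mem_erase,
            Finset.mem_singleton]
          constructor
          · rintro ⟨hg1, hg2⟩
            rcases hg1 with h | ⟨_, h⟩
            · exact h
            · exact absurd h hg2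
          · rintro rfl
            exact ⟨Or.inl rfl, he'F⟩
        refine ⟨ℓ + 1, by omega,
          fun i => match i with | 0 => F | (j + 1) => f j, rfl, ?_, ?_, ?_⟩
        · exact hfl
        · intro i hi
          cases i with
          | zero => exact ⟨hFA, hF, hcard⟩
          | succ j => exact hprops j (by omega)
        · intro i hi
          cases i with
          | zero =>
            show (F \ f 0).card = 1 ∧ (f 0 \ F).card = 1
            rw [hf0, hFdiff, hF1diff]
            simp
          | succ j => exact hdiffs j (by omega)
      by_cases hv1 : inDeg F e'.2 = 0
      · -- case (ii): find a pendant leaf arc to remove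
        have hPssub : P ⊂ F := by
          refine Finset.ssubset_iff_subset_ne.mpr ⟨hPF, ?_⟩
          rintro rfl
          exact hFF' (Finset.eq_of_subset_of_card_le hPF' hcard.ge)
        have hPimg : P.image Prod.snd ⊆ F.image Prod.snd := Finset.image_subset_image hPF
        have hSne : ((F.image Prod.snd) \ (P.image Prod.snd)).Nonempty := by
          rw [← Finset.card_pos, Finset.card_sdiff_of_subset hPimg]
          have himg : (F.image Prod.snd).card = F.card :=
            Finset.card_image_of_injOn (fun a ha b hb hab => arc_eq (hF.1.1 a.2) ha hb rfl hab.symm)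
          have h1 : (P.image Prod.snd).card ≤ P.card := Finset.card_image_le
          have h2 : P.card < F.card := Finset.card_lt_card hPssub
          omega
        obtain ⟨x, hxS, hxmax⟩ := Finset.exists_max_image _
          (fun y => (Finset.univ.filter fun w => ReflTransGen (arcRel F) w y).card) hSne
        obtain ⟨hxF, hxP⟩ := Finset.mem_sdiff.mp hxS
        obtain ⟨e, heF, hex⟩ := Finset.mem_image.mp hxF
        subst hex
        have hleaf : ∀ g ∈ F, g.1 ≠ e.2 := by
          intro g hg hg1
          have hgP : g ∉ P := by
            intro hgP
            by_cases h0 : inDeg F' e.2 = 0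
            · have hxV : e.2 ∈ arcVerts F' := mem_arcVerts.mpr ⟨g, hPF' hgP, Or.inl hg1⟩
              exact inDeg_ne_zero heF (hF.2.1 _ (hF'.2.2 _ hxV h0))
            · obtain ⟨g2, hg2F', hg22⟩ := exists_in_arc h0
              have hg2P : g2 ∈ P := hcl g2 hg2F' g hgP (hg22.trans hg1.symm)
              have hg2e : g2 = e := arc_eq (hF.1.1 e.2) (hPF hg2P) heF hg22 rfl
              exact hxP (Finset.mem_image.mpr ⟨e, hg2e ▸ hg2P, rfl⟩)
          have hyP : g.2 ∉ P.image Prod.snd := by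
            intro hyim
            obtain ⟨p, hpP, hp2⟩ := Finset.mem_image.mp hyim
            have : p = g := arc_eq (hF.1.1 g.2) (hPF hpP) hg hp2 rfl
            exact hgP (this ▸ hpP)
          have hyS : g.2 ∈ (F.image Prod.snd) \ (P.image Prod.snd) :=
            Finset.mem_sdiff.mpr ⟨Finset.mem_image_of_mem _ hg, hyP⟩
          have harcg : arcRel F e.2 g.2 := by
            show (e.2, g.2) ∈ F
            rw [← hg1]
            simpa using hg
          have hsubanc : (Finset.univ.filter fun w => ReflTransGen (arcRel F) w e.2) ⊆
              (Finset.univ.filter fun w => ReflTransGen (arcRel F) w g.2) := by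
            intro w hw
            exact mem_filter.mpr ⟨mem_univ _, (mem_filter.mp hw).2.tail harcg⟩
          have hg2notin : g.2 ∉ (Finset.univ.filter fun w => ReflTransGen (arcRel F) w e.2) := by
            intro hmem
            have hrtg : ReflTransGen (arcRel F) g.2 e.2 := (mem_filter.mp hmem).2
            exact hF.1.2 g hg (hg1 ▸ hrtg)
          have hg2in : g.2 ∈ (Finset.univ.filter fun w => ReflTransGen (arcRel F) w g.2) :=
            mem_filter.mpr ⟨mem_univ _, ReflTransGen.refl⟩
          have hlt : (Finset.univ.filter fun w => ReflTransGen (arcRel F) w e.2).card <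
              (Finset.univ.filter fun w => ReflTransGen (arcRel F) w g.2).card :=
            Finset.card_lt_card ((Finset.ssubset_iff_of_subset hsubanc).mpr ⟨g.2, hg2in, hg2notin⟩)
          exact absurd (hxmax g.2 hyS) (not_le.mpr hlt)
        have hxu : e.2 ≠ e'.1 := by
          intro hq
          rcases hground with h | ⟨g0, hg0, hg02⟩
          · exact inDeg_ne_zero heF (hF.2.1 _ (hq ▸ h))
          · exact hxP (Finset.mem_image.mpr ⟨g0, hg0, hg02.trans hq.symm⟩)
        have hxv : e.2 ≠ e'.2 := fun h => inDeg_ne_zero heF (h ▸ hv1)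
        have heP : e ∉ P := fun h => hxP (Finset.mem_image.mpr ⟨e, h, rfl⟩)
        exact key e heF heP (Or.inr ⟨hleaf, hxu, hxv, hv1⟩)
      · -- case (i): v already has an in-arc in F; replace it
        obtain ⟨e, heF, hev⟩ := exists_in_arc hv1
        have heP : e ∉ P := by
          intro h
          have : e = e' := arc_eq (hF'.1.1 e'.2) (hPF' h) he'F' hev rfl
          exact he'F (this ▸ heF)
        exact key e heF heP (Or.inl hev)

end StmtAux

/-- Any two `R`-directed forests with `k` arcs in a finite digraph are connected by a
reconfiguration sequence of `R`-directed forests with `k` arcs, of length at most `k`. -/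
theorem stmt7 {V : Type*} [Fintype V] [DecidableEq V] (A : Finset (V × V)) (R : Finset V)
    (k : ℕ) (hk : 0 < k) (F F' : Finset (V × V))
    (hFA : F ⊆ A) (hF'A : F' ⊆ A) (hF : IsRDirForest R F) (hF' : IsRDirForest R F')
    (hkF : F.card = k) (hkF' : F'.card = k) :
    ∃ ℓ ≤ k, ∃ f : ℕ → Finset (V × V), f 0 = F ∧ f ℓ = F' ∧
      (∀ i ≤ ℓ, f i ⊆ A ∧ IsRDirForest R (f i) ∧ (f i).card = k) ∧
      (∀ i < ℓ, (f i \ f (i + 1)).card = 1 ∧ (f (i + 1) \ f i).card = 1) := by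
  classical
  obtain ⟨ℓ, hℓ, f, h0, hl, hprops, hdiffs⟩ :=
    StmtAux.main A R F' hF'A hF' k F ∅ hFA hF (hkF.trans hkF'.symm)
      (Finset.empty_subset _) (Finset.empty_subset _)
      (fun f hf g hg => absurd hg (Finset.notMem_empty g))
      (by simpa [hkF'] using le_refl k)
  exact ⟨ℓ, hℓ, f, h0, hl,
    fun i hi => ⟨(hprops i hi).1, (hprops i hi).2.1, by rw [(hprops i hi).2.2, hkF']⟩, hdiffs⟩
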